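/- Let C = [[13,−2],[20,−3]], W₂₀ = [[1,0],[20,1]], and L₂₀ = [[4,−1/2],[10,−1]] ∈ SL(2,ℝ). Then each of the eight matrices P₁ = [[1,1],[0,1]], Q = [[−1,0],[0,−1]], C, L₂₀W₂₀L₂₀⁻¹, L₂₀⁻¹W₂₀L₂₀, L₂₀CL₂₀⁻¹, L₂₀⁻¹CL₂₀, and L₂₀³ has integer entries and lies in Γ₀(20), and together these eight matrices generate Γ₀(20). -/

import Mathlib

open Matrix MatrixGroups

/-- `C = [[13,-2],[20,-3]]` as an element of `SL(2,ℝ)`. -/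
noncomputable def Cmat : SL(2, ℝ) :=
  ⟨!![13, -2; 20, -3], by norm_num [Matrix.det_fin_two_of]⟩

/-- `W₂₀ = [[1,0],[20,1]]` as an element of `SL(2,ℝ)`. -/
noncomputable def Wmat : SL(2, ℝ) :=
  ⟨!![1, 0; 20, 1], by norm_num [Matrix.det_fin_two_of]⟩

/-- `L₂₀ = [[4,-1/2],[10,-1]]` as an element of `SL(2,ℝ)`. -/
noncomputable def Lmat : SL(2, ℝ) :=
  ⟨!![4, -1/2; 10, -1], by norm_num [Matrix.det_fin_two_of]⟩

/-- `P₁ = [[1,1],[0,1]]` as an element of `SL(2,ℝ)`. -/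
noncomputable def Pmat : SL(2, ℝ) :=
  ⟨!![1, 1; 0, 1], by norm_num [Matrix.det_fin_two_of]⟩

/-- `Q = [[-1,0],[0,-1]]` as an element of `SL(2,ℝ)`. -/
noncomputable def Qmat : SL(2, ℝ) :=
  ⟨!![-1, 0; 0, -1], by norm_num [Matrix.det_fin_two_of]⟩

open ModularGroup Subgroup

section G20aux

private def pz : SL(2,ℤ) := ⟨!![1,1;0,1], by norm_num [Matrix.det_fin_two_of]⟩
private def qz : SL(2,ℤ) := ⟨!![-1,0;0,-1], by norm_num [Matrix.det_fin_two_of]⟩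
private def cz : SL(2,ℤ) := ⟨!![13,-2;20,-3], by norm_num [Matrix.det_fin_two_of]⟩
private def az : SL(2,ℤ) := ⟨!![11,-5;20,-9], by norm_num [Matrix.det_fin_two_of]⟩
private def bz : SL(2,ℤ) := ⟨!![41,-5;320,-39], by norm_num [Matrix.det_fin_two_of]⟩
private def dz : SL(2,ℤ) := ⟨!![23,-5;60,-13], by norm_num [Matrix.det_fin_two_of]⟩
private def ez : SL(2,ℤ) := ⟨!![-7,1;-120,17], by norm_num [Matrix.det_fin_two_of]⟩
private def fz : SL(2,ℤ) := ⟨!![29,-4;80,-11], by norm_num [Matrix.det_fin_two_of]⟩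

private def gensZ : Set SL(2,ℤ) := {pz, qz, cz, az, bz, dz, ez, fz}

private def HZ : Subgroup SL(2,ℤ) := Subgroup.closure gensZ

private lemma mpz : pz ∈ HZ := subset_closure (by simp [gensZ])
private lemma mqz : qz ∈ HZ := subset_closure (by simp [gensZ])
private lemma mcz : cz ∈ HZ := subset_closure (by simp [gensZ])
private lemma maz : az ∈ HZ := subset_closure (by simp [gensZ])
private lemma mbz : bz ∈ HZ := subset_closure (by simp [gensZ])
private lemma mdz : dz ∈ HZ := subset_closure (by simp [gensZ])
private lemma mez : ez ∈ HZ := subset_closure (by simp [gensZ])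
private lemma mfz : fz ∈ HZ := subset_closure (by simp [gensZ])

private def reps : Fin 36 → SL(2,ℤ) :=
  ![⟨!![1,0;0,1], by norm_num [Matrix.det_fin_two_of]⟩,
    ⟨!![0,-1;1,0], by norm_num [Matrix.det_fin_two_of]⟩,
    ⟨!![0,-1;1,1], by norm_num [Matrix.det_fin_two_of]⟩,
    ⟨!![0,-1;1,2], by norm_num [Matrix.det_fin_two_of]⟩,
    ⟨!![0,-1;1,3], by norm_num [Matrix.det_fin_two_of]⟩,
    ⟨!![0,-1;1,4], by norm_num [Matrix.det_fin_two_of]⟩,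
    ⟨!![0,-1;1,5], by norm_num [Matrix.det_fin_two_of]⟩,
    ⟨!![0,-1;1,6], by norm_num [Matrix.det_fin_two_of]⟩,
    ⟨!![0,-1;1,7], by norm_num [Matrix.det_fin_two_of]⟩,
    ⟨!![0,-1;1,8], by norm_num [Matrix.det_fin_two_of]⟩,
    ⟨!![0,-1;1,9], by norm_num [Matrix.det_fin_two_of]⟩,
    ⟨!![0,-1;1,-10], by norm_num [Matrix.det_fin_two_of]⟩,
    ⟨!![0,-1;1,-9], by norm_num [Matrix.det_fin_two_of]⟩,
    ⟨!![0,-1;1,-8], by norm_num [Matrix.det_fin_two_of]⟩,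
    ⟨!![0,-1;1,-7], by norm_num [Matrix.det_fin_two_of]⟩,
    ⟨!![0,-1;1,-6], by norm_num [Matrix.det_fin_two_of]⟩,
    ⟨!![0,-1;1,-5], by norm_num [Matrix.det_fin_two_of]⟩,
    ⟨!![0,-1;1,-4], by norm_num [Matrix.det_fin_two_of]⟩,
    ⟨!![0,-1;1,-3], by norm_num [Matrix.det_fin_two_of]⟩,
    ⟨!![0,-1;1,-2], by norm_num [Matrix.det_fin_two_of]⟩,
    ⟨!![0,-1;1,-1], by norm_num [Matrix.det_fin_two_of]⟩,
    ⟨!![1,0;2,1], by norm_num [Matrix.det_fin_two_of]⟩,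
    ⟨!![1,1;2,3], by norm_num [Matrix.det_fin_two_of]⟩,
    ⟨!![1,2;2,5], by norm_num [Matrix.det_fin_two_of]⟩,
    ⟨!![1,3;2,7], by norm_num [Matrix.det_fin_two_of]⟩,
    ⟨!![1,4;2,9], by norm_num [Matrix.det_fin_two_of]⟩,
    ⟨!![1,0;4,1], by norm_num [Matrix.det_fin_two_of]⟩,
    ⟨!![-1,-1;4,3], by norm_num [Matrix.det_fin_two_of]⟩,
    ⟨!![1,1;4,5], by norm_num [Matrix.det_fin_two_of]⟩,
    ⟨!![-1,-2;4,7], by norm_num [Matrix.det_fin_two_of]⟩,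
    ⟨!![1,2;4,9], by norm_num [Matrix.det_fin_two_of]⟩,
    ⟨!![1,0;5,1], by norm_num [Matrix.det_fin_two_of]⟩,
    ⟨!![-2,-1;5,2], by norm_num [Matrix.det_fin_two_of]⟩,
    ⟨!![2,1;5,3], by norm_num [Matrix.det_fin_two_of]⟩,
    ⟨!![-1,-1;5,4], by norm_num [Matrix.det_fin_two_of]⟩,
    ⟨!![1,0;-10,1], by norm_num [Matrix.det_fin_two_of]⟩]


private lemma sl2z_gen (g : SL(2,ℤ)) : g ∈ Subgroup.closure ({S, T} : Set SL(2,ℤ)) := by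
  have hS : S ∈ Subgroup.closure ({S, T} : Set SL(2,ℤ)) := subset_closure (by simp)
  have hT : T ∈ Subgroup.closure ({S, T} : Set SL(2,ℤ)) := subset_closure (by simp)
  suffices H : ∀ n : ℕ, ∀ g : SL(2,ℤ), (g.1 1 0).natAbs = n →
      g ∈ Subgroup.closure ({S, T} : Set SL(2,ℤ)) from H _ g rfl
  intro n
  induction n using Nat.strong_induction_on with
  | _ n ih =>
    intro g hg
    have hdet : g.1.det = 1 := g.2
    rw [Matrix.det_fin_two] at hdet
    rcases eq_or_ne (g.1 1 0) 0 with hc | hc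
    · rw [hc, mul_zero, sub_zero] at hdet
      rcases Int.mul_eq_one_iff_eq_one_or_neg_one.mp hdet with ⟨h1, h2⟩ | ⟨h1, h2⟩
      · have : g = T ^ (g.1 0 1) := by
          apply Subtype.ext
          rw [coe_T_zpow]
          ext i j
          fin_cases i <;> fin_cases j <;> simp [h1, h2, hc]
        rw [this]; exact zpow_mem hT _
      · have : g = S ^ 2 * T ^ (-(g.1 0 1)) := by
          apply Subtype.ext
          have hS2 : (S ^ 2 : SL(2,ℤ)).1 = !![(-1 : ℤ),0;0,-1] := by
            rw [pow_two, Matrix.SpecialLinearGroup.coe_mul, coe_S]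
            norm_num [Matrix.mul_fin_two]
          rw [Matrix.SpecialLinearGroup.coe_mul, hS2, coe_T_zpow]
          ext i j
          fin_cases i <;> fin_cases j <;>
            simp [Matrix.mul_apply, Fin.sum_univ_succ, h1, h2, hc]
        rw [this]
        exact mul_mem (pow_mem hS 2) (zpow_mem hT _)
    · set a := g.1 0 0 with ha
      set cc := g.1 1 0 with hcc
      set g' := S * T ^ (-(a / cc)) * g with hg'
      have hent : g'.1 1 0 = a % cc := by
        rw [hg']
        simp only [Matrix.SpecialLinearGroup.coe_mul, coe_T_zpow, coe_S]
        rw [Int.emod_def]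
        simp [Matrix.mul_apply, Fin.sum_univ_succ]
        ring
      have hlt : (a % cc).natAbs < n := by
        rw [← hg]
        have h1 : 0 ≤ a % cc := Int.emod_nonneg a hc
        have h2 : a % cc < |cc| := by rw [Int.abs_eq_natAbs]; exact Int.emod_lt a hc
        have h3 := Int.abs_eq_natAbs cc
        omega
      have hmem' : g' ∈ Subgroup.closure ({S, T} : Set SL(2,ℤ)) := ih _ hlt g' (by rw [hent])
      have : g = T ^ (a / cc) * S⁻¹ * g' := by rw [hg']; group
      rw [this]
      exact mul_mem (mul_mem (zpow_mem hT _) (inv_mem hS)) hmem'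

private lemma baseS : ∀ i : Fin 36, ∃ j : Fin 36, ∃ h ∈ HZ, reps i * (S : SL(2,ℤ)) = h * reps j := by
  intro i
  fin_cases i
  · exact ⟨(1 : Fin 36), 1, one_mem _, Subtype.ext (by decide)⟩
  · exact ⟨(0 : Fin 36), qz, mqz, Subtype.ext (by decide)⟩
  · exact ⟨(20 : Fin 36), pz⁻¹, (inv_mem mpz), Subtype.ext (by decide)⟩
  · exact ⟨(25 : Fin 36), pz⁻¹ * az, (mul_mem (inv_mem mpz) maz), Subtype.ext (by decide)⟩
  · exact ⟨(14 : Fin 36), pz⁻¹ * cz * qz, (mul_mem (mul_mem (inv_mem mpz) mcz) mqz), Subtype.ext (by decide)⟩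
  · exact ⟨(30 : Fin 36), pz⁻¹ * cz * fz⁻¹ * dz, (mul_mem (mul_mem (mul_mem (inv_mem mpz) mcz) (inv_mem mfz)) mdz), Subtype.ext (by decide)⟩
  · exact ⟨(33 : Fin 36), pz⁻¹ * cz * fz⁻¹, (mul_mem (mul_mem (inv_mem mpz) mcz) (inv_mem mfz)), Subtype.ext (by decide)⟩
  · exact ⟨(22 : Fin 36), pz⁻¹ * cz * fz⁻¹, (mul_mem (mul_mem (inv_mem mpz) mcz) (inv_mem mfz)), Subtype.ext (by decide)⟩
  · exact ⟨(18 : Fin 36), pz⁻¹ * cz * fz⁻¹ * qz, (mul_mem (mul_mem (mul_mem (inv_mem mpz) mcz) (inv_mem mfz)) mqz), Subtype.ext (by decide)⟩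
  · exact ⟨(29 : Fin 36), pz⁻¹ * cz * fz⁻¹ * dz⁻¹ * fz * bz * cz⁻¹ * pz * qz, (mul_mem (mul_mem (mul_mem (mul_mem (mul_mem (mul_mem (mul_mem (mul_mem (inv_mem mpz) mcz) (inv_mem mfz)) (inv_mem mdz)) mfz) mbz) (inv_mem mcz)) mpz) mqz), Subtype.ext (by decide)⟩
  · exact ⟨(12 : Fin 36), pz⁻¹ * cz * fz⁻¹ * dz⁻¹ * fz * bz * qz, (mul_mem (mul_mem (mul_mem (mul_mem (mul_mem (mul_mem (inv_mem mpz) mcz) (inv_mem mfz)) (inv_mem mdz)) mfz) mbz) mqz), Subtype.ext (by decide)⟩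
  · exact ⟨(35 : Fin 36), ez * cz⁻¹ * pz * qz, (mul_mem (mul_mem (mul_mem mez (inv_mem mcz)) mpz) mqz), Subtype.ext (by decide)⟩
  · exact ⟨(10 : Fin 36), bz⁻¹ * fz⁻¹ * dz * fz * cz⁻¹ * pz, (mul_mem (mul_mem (mul_mem (mul_mem (mul_mem (inv_mem mbz) (inv_mem mfz)) mdz) mfz) (inv_mem mcz)) mpz), Subtype.ext (by decide)⟩
  · exact ⟨(27 : Fin 36), cz⁻¹ * pz, (mul_mem (inv_mem mcz) mpz), Subtype.ext (by decide)⟩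
  · exact ⟨(4 : Fin 36), cz⁻¹ * pz, (mul_mem (inv_mem mcz) mpz), Subtype.ext (by decide)⟩
  · exact ⟨(24 : Fin 36), cz⁻¹ * az * qz, (mul_mem (mul_mem (inv_mem mcz) maz) mqz), Subtype.ext (by decide)⟩
  · exact ⟨(31 : Fin 36), qz, mqz, Subtype.ext (by decide)⟩
  · exact ⟨(26 : Fin 36), qz, mqz, Subtype.ext (by decide)⟩
  · exact ⟨(8 : Fin 36), fz * cz⁻¹ * pz, (mul_mem (mul_mem mfz (inv_mem mcz)) mpz), Subtype.ext (by decide)⟩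
  · exact ⟨(21 : Fin 36), qz, mqz, Subtype.ext (by decide)⟩
  · exact ⟨(2 : Fin 36), pz * qz, (mul_mem mpz mqz), Subtype.ext (by decide)⟩
  · exact ⟨(19 : Fin 36), 1, one_mem _, Subtype.ext (by decide)⟩
  · exact ⟨(7 : Fin 36), fz * cz⁻¹ * pz * qz, (mul_mem (mul_mem (mul_mem mfz (inv_mem mcz)) mpz) mqz), Subtype.ext (by decide)⟩
  · exact ⟨(32 : Fin 36), az⁻¹ * pz * qz, (mul_mem (mul_mem (inv_mem maz) mpz) mqz), Subtype.ext (by decide)⟩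
  · exact ⟨(15 : Fin 36), az⁻¹ * cz, (mul_mem (inv_mem maz) mcz), Subtype.ext (by decide)⟩
  · exact ⟨(3 : Fin 36), az⁻¹ * pz * qz, (mul_mem (mul_mem (inv_mem maz) mpz) mqz), Subtype.ext (by decide)⟩
  · exact ⟨(17 : Fin 36), 1, one_mem _, Subtype.ext (by decide)⟩
  · exact ⟨(13 : Fin 36), pz⁻¹ * cz * qz, (mul_mem (mul_mem (inv_mem mpz) mcz) mqz), Subtype.ext (by decide)⟩
  · exact ⟨(34 : Fin 36), dz⁻¹ * fz * cz⁻¹ * pz * qz, (mul_mem (mul_mem (mul_mem (mul_mem (inv_mem mdz) mfz) (inv_mem mcz)) mpz) mqz), Subtype.ext (by decide)⟩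
  · exact ⟨(9 : Fin 36), pz⁻¹ * cz * bz⁻¹ * fz⁻¹ * dz * fz * cz⁻¹ * pz, (mul_mem (mul_mem (mul_mem (mul_mem (mul_mem (mul_mem (mul_mem (inv_mem mpz) mcz) (inv_mem mbz)) (inv_mem mfz)) mdz) mfz) (inv_mem mcz)) mpz), Subtype.ext (by decide)⟩
  · exact ⟨(5 : Fin 36), dz⁻¹ * fz * cz⁻¹ * pz * qz, (mul_mem (mul_mem (mul_mem (mul_mem (inv_mem mdz) mfz) (inv_mem mcz)) mpz) mqz), Subtype.ext (by decide)⟩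
  · exact ⟨(16 : Fin 36), 1, one_mem _, Subtype.ext (by decide)⟩
  · exact ⟨(23 : Fin 36), pz⁻¹ * az, (mul_mem (inv_mem mpz) maz), Subtype.ext (by decide)⟩
  · exact ⟨(6 : Fin 36), fz * cz⁻¹ * pz * qz, (mul_mem (mul_mem (mul_mem mfz (inv_mem mcz)) mpz) mqz), Subtype.ext (by decide)⟩
  · exact ⟨(28 : Fin 36), pz⁻¹ * cz * fz⁻¹ * dz, (mul_mem (mul_mem (mul_mem (inv_mem mpz) mcz) (inv_mem mfz)) mdz), Subtype.ext (by decide)⟩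
  · exact ⟨(11 : Fin 36), pz⁻¹ * cz * ez⁻¹, (mul_mem (mul_mem (inv_mem mpz) mcz) (inv_mem mez)), Subtype.ext (by decide)⟩

private lemma baseT : ∀ i : Fin 36, ∃ j : Fin 36, ∃ h ∈ HZ, reps i * (T : SL(2,ℤ)) = h * reps j := by
  intro i
  fin_cases i
  · exact ⟨(0 : Fin 36), pz, mpz, Subtype.ext (by decide)⟩
  · exact ⟨(2 : Fin 36), 1, one_mem _, Subtype.ext (by decide)⟩
  · exact ⟨(3 : Fin 36), 1, one_mem _, Subtype.ext (by decide)⟩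
  · exact ⟨(4 : Fin 36), 1, one_mem _, Subtype.ext (by decide)⟩
  · exact ⟨(5 : Fin 36), 1, one_mem _, Subtype.ext (by decide)⟩
  · exact ⟨(6 : Fin 36), 1, one_mem _, Subtype.ext (by decide)⟩
  · exact ⟨(7 : Fin 36), 1, one_mem _, Subtype.ext (by decide)⟩
  · exact ⟨(8 : Fin 36), 1, one_mem _, Subtype.ext (by decide)⟩
  · exact ⟨(9 : Fin 36), 1, one_mem _, Subtype.ext (by decide)⟩
  · exact ⟨(10 : Fin 36), 1, one_mem _, Subtype.ext (by decide)⟩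
  · exact ⟨(11 : Fin 36), pz⁻¹ * cz * ez⁻¹, (mul_mem (mul_mem (inv_mem mpz) mcz) (inv_mem mez)), Subtype.ext (by decide)⟩
  · exact ⟨(12 : Fin 36), 1, one_mem _, Subtype.ext (by decide)⟩
  · exact ⟨(13 : Fin 36), 1, one_mem _, Subtype.ext (by decide)⟩
  · exact ⟨(14 : Fin 36), 1, one_mem _, Subtype.ext (by decide)⟩
  · exact ⟨(15 : Fin 36), 1, one_mem _, Subtype.ext (by decide)⟩
  · exact ⟨(16 : Fin 36), 1, one_mem _, Subtype.ext (by decide)⟩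
  · exact ⟨(17 : Fin 36), 1, one_mem _, Subtype.ext (by decide)⟩
  · exact ⟨(18 : Fin 36), 1, one_mem _, Subtype.ext (by decide)⟩
  · exact ⟨(19 : Fin 36), 1, one_mem _, Subtype.ext (by decide)⟩
  · exact ⟨(20 : Fin 36), 1, one_mem _, Subtype.ext (by decide)⟩
  · exact ⟨(1 : Fin 36), 1, one_mem _, Subtype.ext (by decide)⟩
  · exact ⟨(22 : Fin 36), 1, one_mem _, Subtype.ext (by decide)⟩
  · exact ⟨(23 : Fin 36), 1, one_mem _, Subtype.ext (by decide)⟩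
  · exact ⟨(24 : Fin 36), 1, one_mem _, Subtype.ext (by decide)⟩
  · exact ⟨(25 : Fin 36), 1, one_mem _, Subtype.ext (by decide)⟩
  · exact ⟨(21 : Fin 36), az⁻¹, (inv_mem maz), Subtype.ext (by decide)⟩
  · exact ⟨(28 : Fin 36), 1, one_mem _, Subtype.ext (by decide)⟩
  · exact ⟨(29 : Fin 36), 1, one_mem _, Subtype.ext (by decide)⟩
  · exact ⟨(30 : Fin 36), 1, one_mem _, Subtype.ext (by decide)⟩
  · exact ⟨(26 : Fin 36), pz⁻¹ * cz * bz⁻¹ * fz⁻¹ * dz, (mul_mem (mul_mem (mul_mem (mul_mem (inv_mem mpz) mcz) (inv_mem mbz)) (inv_mem mfz)) mdz), Subtype.ext (by decide)⟩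
  · exact ⟨(27 : Fin 36), dz⁻¹ * fz * cz⁻¹ * pz, (mul_mem (mul_mem (mul_mem (inv_mem mdz) mfz) (inv_mem mcz)) mpz), Subtype.ext (by decide)⟩
  · exact ⟨(32 : Fin 36), cz⁻¹ * pz, (mul_mem (inv_mem mcz) mpz), Subtype.ext (by decide)⟩
  · exact ⟨(33 : Fin 36), pz⁻¹ * az * qz, (mul_mem (mul_mem (inv_mem mpz) maz) mqz), Subtype.ext (by decide)⟩
  · exact ⟨(34 : Fin 36), fz * cz⁻¹ * pz, (mul_mem (mul_mem mfz (inv_mem mcz)) mpz), Subtype.ext (by decide)⟩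
  · exact ⟨(31 : Fin 36), pz⁻¹ * cz * fz⁻¹ * dz * qz, (mul_mem (mul_mem (mul_mem (mul_mem (inv_mem mpz) mcz) (inv_mem mfz)) mdz) mqz), Subtype.ext (by decide)⟩
  · exact ⟨(35 : Fin 36), pz⁻¹ * cz * fz⁻¹ * dz⁻¹ * fz * bz * ez * cz⁻¹ * pz, (mul_mem (mul_mem (mul_mem (mul_mem (mul_mem (mul_mem (mul_mem (mul_mem (inv_mem mpz) mcz) (inv_mem mfz)) (inv_mem mdz)) mfz) mbz) mez) (inv_mem mcz)) mpz), Subtype.ext (by decide)⟩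

private lemma baseSi : ∀ i : Fin 36, ∃ j : Fin 36, ∃ h ∈ HZ, reps i * (S⁻¹ : SL(2,ℤ)) = h * reps j := by
  intro i
  fin_cases i
  · exact ⟨(1 : Fin 36), qz, mqz, Subtype.ext (by decide)⟩
  · exact ⟨(0 : Fin 36), 1, one_mem _, Subtype.ext (by decide)⟩
  · exact ⟨(20 : Fin 36), pz⁻¹ * qz, (mul_mem (inv_mem mpz) mqz), Subtype.ext (by decide)⟩
  · exact ⟨(25 : Fin 36), pz⁻¹ * az * qz, (mul_mem (mul_mem (inv_mem mpz) maz) mqz), Subtype.ext (by decide)⟩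
  · exact ⟨(14 : Fin 36), pz⁻¹ * cz, (mul_mem (inv_mem mpz) mcz), Subtype.ext (by decide)⟩
  · exact ⟨(30 : Fin 36), pz⁻¹ * cz * fz⁻¹ * dz * qz, (mul_mem (mul_mem (mul_mem (mul_mem (inv_mem mpz) mcz) (inv_mem mfz)) mdz) mqz), Subtype.ext (by decide)⟩
  · exact ⟨(33 : Fin 36), pz⁻¹ * cz * fz⁻¹ * qz, (mul_mem (mul_mem (mul_mem (inv_mem mpz) mcz) (inv_mem mfz)) mqz), Subtype.ext (by decide)⟩
  · exact ⟨(22 : Fin 36), pz⁻¹ * cz * fz⁻¹ * qz, (mul_mem (mul_mem (mul_mem (inv_mem mpz) mcz) (inv_mem mfz)) mqz), Subtype.ext (by decide)⟩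
  · exact ⟨(18 : Fin 36), pz⁻¹ * cz * fz⁻¹, (mul_mem (mul_mem (inv_mem mpz) mcz) (inv_mem mfz)), Subtype.ext (by decide)⟩
  · exact ⟨(29 : Fin 36), pz⁻¹ * cz * fz⁻¹ * dz⁻¹ * fz * bz * cz⁻¹ * pz, (mul_mem (mul_mem (mul_mem (mul_mem (mul_mem (mul_mem (mul_mem (inv_mem mpz) mcz) (inv_mem mfz)) (inv_mem mdz)) mfz) mbz) (inv_mem mcz)) mpz), Subtype.ext (by decide)⟩
  · exact ⟨(12 : Fin 36), pz⁻¹ * cz * fz⁻¹ * dz⁻¹ * fz * bz, (mul_mem (mul_mem (mul_mem (mul_mem (mul_mem (inv_mem mpz) mcz) (inv_mem mfz)) (inv_mem mdz)) mfz) mbz), Subtype.ext (by decide)⟩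
  · exact ⟨(35 : Fin 36), ez * cz⁻¹ * pz, (mul_mem (mul_mem mez (inv_mem mcz)) mpz), Subtype.ext (by decide)⟩
  · exact ⟨(10 : Fin 36), bz⁻¹ * fz⁻¹ * dz * fz * cz⁻¹ * pz * qz, (mul_mem (mul_mem (mul_mem (mul_mem (mul_mem (mul_mem (inv_mem mbz) (inv_mem mfz)) mdz) mfz) (inv_mem mcz)) mpz) mqz), Subtype.ext (by decide)⟩
  · exact ⟨(27 : Fin 36), cz⁻¹ * pz * qz, (mul_mem (mul_mem (inv_mem mcz) mpz) mqz), Subtype.ext (by decide)⟩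
  · exact ⟨(4 : Fin 36), cz⁻¹ * pz * qz, (mul_mem (mul_mem (inv_mem mcz) mpz) mqz), Subtype.ext (by decide)⟩
  · exact ⟨(24 : Fin 36), cz⁻¹ * az, (mul_mem (inv_mem mcz) maz), Subtype.ext (by decide)⟩
  · exact ⟨(31 : Fin 36), 1, one_mem _, Subtype.ext (by decide)⟩
  · exact ⟨(26 : Fin 36), 1, one_mem _, Subtype.ext (by decide)⟩
  · exact ⟨(8 : Fin 36), fz * cz⁻¹ * pz * qz, (mul_mem (mul_mem (mul_mem mfz (inv_mem mcz)) mpz) mqz), Subtype.ext (by decide)⟩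
  · exact ⟨(21 : Fin 36), 1, one_mem _, Subtype.ext (by decide)⟩
  · exact ⟨(2 : Fin 36), pz, mpz, Subtype.ext (by decide)⟩
  · exact ⟨(19 : Fin 36), qz, mqz, Subtype.ext (by decide)⟩
  · exact ⟨(7 : Fin 36), fz * cz⁻¹ * pz, (mul_mem (mul_mem mfz (inv_mem mcz)) mpz), Subtype.ext (by decide)⟩
  · exact ⟨(32 : Fin 36), az⁻¹ * pz, (mul_mem (inv_mem maz) mpz), Subtype.ext (by decide)⟩
  · exact ⟨(15 : Fin 36), az⁻¹ * cz * qz, (mul_mem (mul_mem (inv_mem maz) mcz) mqz), Subtype.ext (by decide)⟩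
  · exact ⟨(3 : Fin 36), az⁻¹ * pz, (mul_mem (inv_mem maz) mpz), Subtype.ext (by decide)⟩
  · exact ⟨(17 : Fin 36), qz, mqz, Subtype.ext (by decide)⟩
  · exact ⟨(13 : Fin 36), pz⁻¹ * cz, (mul_mem (inv_mem mpz) mcz), Subtype.ext (by decide)⟩
  · exact ⟨(34 : Fin 36), dz⁻¹ * fz * cz⁻¹ * pz, (mul_mem (mul_mem (mul_mem (inv_mem mdz) mfz) (inv_mem mcz)) mpz), Subtype.ext (by decide)⟩
  · exact ⟨(9 : Fin 36), pz⁻¹ * cz * bz⁻¹ * fz⁻¹ * dz * fz * cz⁻¹ * pz * qz, (mul_mem (mul_mem (mul_mem (mul_mem (mul_mem (mul_mem (mul_mem (mul_mem (inv_mem mpz) mcz) (inv_mem mbz)) (inv_mem mfz)) mdz) mfz) (inv_mem mcz)) mpz) mqz), Subtype.ext (by decide)⟩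
  · exact ⟨(5 : Fin 36), dz⁻¹ * fz * cz⁻¹ * pz, (mul_mem (mul_mem (mul_mem (inv_mem mdz) mfz) (inv_mem mcz)) mpz), Subtype.ext (by decide)⟩
  · exact ⟨(16 : Fin 36), qz, mqz, Subtype.ext (by decide)⟩
  · exact ⟨(23 : Fin 36), pz⁻¹ * az * qz, (mul_mem (mul_mem (inv_mem mpz) maz) mqz), Subtype.ext (by decide)⟩
  · exact ⟨(6 : Fin 36), fz * cz⁻¹ * pz, (mul_mem (mul_mem mfz (inv_mem mcz)) mpz), Subtype.ext (by decide)⟩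
  · exact ⟨(28 : Fin 36), pz⁻¹ * cz * fz⁻¹ * dz * qz, (mul_mem (mul_mem (mul_mem (mul_mem (inv_mem mpz) mcz) (inv_mem mfz)) mdz) mqz), Subtype.ext (by decide)⟩
  · exact ⟨(11 : Fin 36), pz⁻¹ * cz * ez⁻¹ * qz, (mul_mem (mul_mem (mul_mem (inv_mem mpz) mcz) (inv_mem mez)) mqz), Subtype.ext (by decide)⟩

private lemma baseTi : ∀ i : Fin 36, ∃ j : Fin 36, ∃ h ∈ HZ, reps i * (T⁻¹ : SL(2,ℤ)) = h * reps j := by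
  intro i
  fin_cases i
  · exact ⟨(0 : Fin 36), pz⁻¹, (inv_mem mpz), Subtype.ext (by decide)⟩
  · exact ⟨(20 : Fin 36), 1, one_mem _, Subtype.ext (by decide)⟩
  · exact ⟨(1 : Fin 36), 1, one_mem _, Subtype.ext (by decide)⟩
  · exact ⟨(2 : Fin 36), 1, one_mem _, Subtype.ext (by decide)⟩
  · exact ⟨(3 : Fin 36), 1, one_mem _, Subtype.ext (by decide)⟩
  · exact ⟨(4 : Fin 36), 1, one_mem _, Subtype.ext (by decide)⟩
  · exact ⟨(5 : Fin 36), 1, one_mem _, Subtype.ext (by decide)⟩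
  · exact ⟨(6 : Fin 36), 1, one_mem _, Subtype.ext (by decide)⟩
  · exact ⟨(7 : Fin 36), 1, one_mem _, Subtype.ext (by decide)⟩
  · exact ⟨(8 : Fin 36), 1, one_mem _, Subtype.ext (by decide)⟩
  · exact ⟨(9 : Fin 36), 1, one_mem _, Subtype.ext (by decide)⟩
  · exact ⟨(10 : Fin 36), ez * cz⁻¹ * pz, (mul_mem (mul_mem mez (inv_mem mcz)) mpz), Subtype.ext (by decide)⟩
  · exact ⟨(11 : Fin 36), 1, one_mem _, Subtype.ext (by decide)⟩
  · exact ⟨(12 : Fin 36), 1, one_mem _, Subtype.ext (by decide)⟩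
  · exact ⟨(13 : Fin 36), 1, one_mem _, Subtype.ext (by decide)⟩
  · exact ⟨(14 : Fin 36), 1, one_mem _, Subtype.ext (by decide)⟩
  · exact ⟨(15 : Fin 36), 1, one_mem _, Subtype.ext (by decide)⟩
  · exact ⟨(16 : Fin 36), 1, one_mem _, Subtype.ext (by decide)⟩
  · exact ⟨(17 : Fin 36), 1, one_mem _, Subtype.ext (by decide)⟩
  · exact ⟨(18 : Fin 36), 1, one_mem _, Subtype.ext (by decide)⟩
  · exact ⟨(19 : Fin 36), 1, one_mem _, Subtype.ext (by decide)⟩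
  · exact ⟨(25 : Fin 36), az, maz, Subtype.ext (by decide)⟩
  · exact ⟨(21 : Fin 36), 1, one_mem _, Subtype.ext (by decide)⟩
  · exact ⟨(22 : Fin 36), 1, one_mem _, Subtype.ext (by decide)⟩
  · exact ⟨(23 : Fin 36), 1, one_mem _, Subtype.ext (by decide)⟩
  · exact ⟨(24 : Fin 36), 1, one_mem _, Subtype.ext (by decide)⟩
  · exact ⟨(29 : Fin 36), dz⁻¹ * fz * bz * cz⁻¹ * pz, (mul_mem (mul_mem (mul_mem (mul_mem (inv_mem mdz) mfz) mbz) (inv_mem mcz)) mpz), Subtype.ext (by decide)⟩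
  · exact ⟨(30 : Fin 36), pz⁻¹ * cz * fz⁻¹ * dz, (mul_mem (mul_mem (mul_mem (inv_mem mpz) mcz) (inv_mem mfz)) mdz), Subtype.ext (by decide)⟩
  · exact ⟨(26 : Fin 36), 1, one_mem _, Subtype.ext (by decide)⟩
  · exact ⟨(27 : Fin 36), 1, one_mem _, Subtype.ext (by decide)⟩
  · exact ⟨(28 : Fin 36), 1, one_mem _, Subtype.ext (by decide)⟩
  · exact ⟨(34 : Fin 36), dz⁻¹ * fz * cz⁻¹ * pz * qz, (mul_mem (mul_mem (mul_mem (mul_mem (inv_mem mdz) mfz) (inv_mem mcz)) mpz) mqz), Subtype.ext (by decide)⟩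
  · exact ⟨(31 : Fin 36), pz⁻¹ * cz, (mul_mem (inv_mem mpz) mcz), Subtype.ext (by decide)⟩
  · exact ⟨(32 : Fin 36), az⁻¹ * pz * qz, (mul_mem (mul_mem (inv_mem maz) mpz) mqz), Subtype.ext (by decide)⟩
  · exact ⟨(33 : Fin 36), pz⁻¹ * cz * fz⁻¹, (mul_mem (mul_mem (inv_mem mpz) mcz) (inv_mem mfz)), Subtype.ext (by decide)⟩
  · exact ⟨(35 : Fin 36), pz⁻¹ * cz * ez⁻¹ * bz⁻¹ * fz⁻¹ * dz * fz * cz⁻¹ * pz, (mul_mem (mul_mem (mul_mem (mul_mem (mul_mem (mul_mem (mul_mem (mul_mem (inv_mem mpz) mcz) (inv_mem mez)) (inv_mem mbz)) (inv_mem mfz)) mdz) mfz) (inv_mem mcz)) mpz), Subtype.ext (by decide)⟩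


private lemma keyZ (g : SL(2,ℤ)) :
    ∀ i : Fin 36, ∃ j : Fin 36, ∃ h ∈ HZ, reps i * g = h * reps j := by
  have hg : g ∈ Submonoid.closure (({S, T} : Set SL(2,ℤ)) ∪ ({S, T} : Set SL(2,ℤ))⁻¹) := by
    have h1 : g ∈ (Subgroup.closure ({S,T} : Set SL(2,ℤ))).toSubmonoid := sl2z_gen g
    rwa [Subgroup.closure_toSubmonoid] at h1
  induction hg using Submonoid.closure_induction with
  | mem x hx =>
    simp only [Set.mem_union, Set.mem_insert_iff, Set.mem_singleton_iff, Set.mem_inv] at hx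
    rcases hx with (rfl | rfl) | (h | h)
    · exact baseS
    · exact baseT
    · have : x = S⁻¹ := by rw [← h, inv_inv]
      subst this; exact baseSi
    · have : x = T⁻¹ := by rw [← h, inv_inv]
      subst this; exact baseTi
  | one => exact fun i => ⟨i, 1, one_mem _, by rw [one_mul, mul_one]⟩
  | mul x y _ _ ihx ihy =>
    intro i
    obtain ⟨j, h, hh, e⟩ := ihx i
    obtain ⟨k, h', hh', e'⟩ := ihy j
    exact ⟨k, h * h', mul_mem hh hh', by rw [← mul_assoc, e, mul_assoc, e', ← mul_assoc]⟩

private lemma HZ_le : HZ ≤ CongruenceSubgroup.Gamma0 20 := by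
  rw [HZ, Subgroup.closure_le]
  intro x hx
  simp only [gensZ, Set.mem_insert_iff, Set.mem_singleton_iff] at hx
  rcases hx with rfl|rfl|rfl|rfl|rfl|rfl|rfl|rfl <;>
    · rw [SetLike.mem_coe, CongruenceSubgroup.Gamma0_mem]; decide

private lemma reps_ne (j : Fin 36) (hj : j ≠ 0) : ¬ (((reps j).1 1 0 : ZMod 20) = 0) := by
  fin_cases j
  · exact absurd rfl hj
  all_goals decide

private lemma reps0 : reps (0 : Fin 36) = 1 := Subtype.ext (by decide)

private lemma gamma_le_HZ : CongruenceSubgroup.Gamma0 20 ≤ HZ := by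
  intro g hg
  obtain ⟨j, h, hh, e⟩ := keyZ g 0
  rw [reps0, one_mul] at e
  have hrj : reps j ∈ CongruenceSubgroup.Gamma0 20 := by
    have hj : reps j = h⁻¹ * g := by rw [e]; group
    rw [hj]
    exact mul_mem (inv_mem (HZ_le hh)) hg
  have hj0 : j = 0 := by
    by_contra hne
    rw [CongruenceSubgroup.Gamma0_mem] at hrj
    exact reps_ne j hne hrj
  rw [hj0, reps0, mul_one] at e
  rw [e]; exact hh

private lemma HZ_eq : HZ = CongruenceSubgroup.Gamma0 20 := le_antisymm HZ_le gamma_le_HZ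

private noncomputable def LmatInv : SL(2, ℝ) := ⟨!![-1, 1/2; -10, 4], by norm_num [Matrix.det_fin_two_of]⟩

private lemma Lmat_inv : Lmat⁻¹ = LmatInv := by
  apply inv_eq_of_mul_eq_one_right
  apply Subtype.ext
  rw [Matrix.SpecialLinearGroup.coe_mul]
  show (Lmat.1 * LmatInv.1) = (1 : SL(2,ℝ)).1
  rw [LmatInv, Lmat]
  norm_num [Matrix.mul_fin_two, Matrix.SpecialLinearGroup.coe_one]
  rw [← Matrix.one_fin_two]

private lemma map_pz : Matrix.SpecialLinearGroup.map (Int.castRingHom ℝ) pz = Pmat := by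
  apply Subtype.ext
  rw [show (Matrix.SpecialLinearGroup.map (Int.castRingHom ℝ) pz).1
      = (Int.castRingHom ℝ).mapMatrix pz.1 from rfl]
  simp only [pz, qz, cz, az, bz, dz, ez, fz, Pmat, Qmat, Cmat, Wmat, Lmat, LmatInv]
  ext i j
  fin_cases i <;> fin_cases j <;>
    simp [Matrix.mul_apply, Fin.sum_univ_succ] <;> norm_num

private lemma map_qz : Matrix.SpecialLinearGroup.map (Int.castRingHom ℝ) qz = Qmat := by
  apply Subtype.ext
  rw [show (Matrix.SpecialLinearGroup.map (Int.castRingHom ℝ) qz).1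
      = (Int.castRingHom ℝ).mapMatrix qz.1 from rfl]
  simp only [pz, qz, cz, az, bz, dz, ez, fz, Pmat, Qmat, Cmat, Wmat, Lmat, LmatInv]
  ext i j
  fin_cases i <;> fin_cases j <;>
    simp [Matrix.mul_apply, Fin.sum_univ_succ] <;> norm_num

private lemma map_cz : Matrix.SpecialLinearGroup.map (Int.castRingHom ℝ) cz = Cmat := by
  apply Subtype.ext
  rw [show (Matrix.SpecialLinearGroup.map (Int.castRingHom ℝ) cz).1
      = (Int.castRingHom ℝ).mapMatrix cz.1 from rfl]
  simp only [pz, qz, cz, az, bz, dz, ez, fz, Pmat, Qmat, Cmat, Wmat, Lmat, LmatInv]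
  ext i j
  fin_cases i <;> fin_cases j <;>
    simp [Matrix.mul_apply, Fin.sum_univ_succ] <;> norm_num

private lemma map_az : Matrix.SpecialLinearGroup.map (Int.castRingHom ℝ) az = Lmat * Wmat * Lmat⁻¹ := by
  rw [Lmat_inv]
  apply Subtype.ext
  rw [Matrix.SpecialLinearGroup.coe_mul, Matrix.SpecialLinearGroup.coe_mul]
  rw [show (Matrix.SpecialLinearGroup.map (Int.castRingHom ℝ) az).1
      = (Int.castRingHom ℝ).mapMatrix az.1 from rfl]
  simp only [pz, qz, cz, az, bz, dz, ez, fz, Pmat, Qmat, Cmat, Wmat, Lmat, LmatInv]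
  ext i j
  fin_cases i <;> fin_cases j <;>
    simp [Matrix.mul_apply, Fin.sum_univ_succ] <;> norm_num

private lemma map_bz : Matrix.SpecialLinearGroup.map (Int.castRingHom ℝ) bz = Lmat⁻¹ * Wmat * Lmat := by
  rw [Lmat_inv]
  apply Subtype.ext
  rw [Matrix.SpecialLinearGroup.coe_mul, Matrix.SpecialLinearGroup.coe_mul]
  rw [show (Matrix.SpecialLinearGroup.map (Int.castRingHom ℝ) bz).1
      = (Int.castRingHom ℝ).mapMatrix bz.1 from rfl]
  simp only [pz, qz, cz, az, bz, dz, ez, fz, Pmat, Qmat, Cmat, Wmat, Lmat, LmatInv]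
  ext i j
  fin_cases i <;> fin_cases j <;>
    simp [Matrix.mul_apply, Fin.sum_univ_succ] <;> norm_num

private lemma map_dz : Matrix.SpecialLinearGroup.map (Int.castRingHom ℝ) dz = Lmat * Cmat * Lmat⁻¹ := by
  rw [Lmat_inv]
  apply Subtype.ext
  rw [Matrix.SpecialLinearGroup.coe_mul, Matrix.SpecialLinearGroup.coe_mul]
  rw [show (Matrix.SpecialLinearGroup.map (Int.castRingHom ℝ) dz).1
      = (Int.castRingHom ℝ).mapMatrix dz.1 from rfl]
  simp only [pz, qz, cz, az, bz, dz, ez, fz, Pmat, Qmat, Cmat, Wmat, Lmat, LmatInv]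
  ext i j
  fin_cases i <;> fin_cases j <;>
    simp [Matrix.mul_apply, Fin.sum_univ_succ] <;> norm_num

private lemma map_ez : Matrix.SpecialLinearGroup.map (Int.castRingHom ℝ) ez = Lmat⁻¹ * Cmat * Lmat := by
  rw [Lmat_inv]
  apply Subtype.ext
  rw [Matrix.SpecialLinearGroup.coe_mul, Matrix.SpecialLinearGroup.coe_mul]
  rw [show (Matrix.SpecialLinearGroup.map (Int.castRingHom ℝ) ez).1
      = (Int.castRingHom ℝ).mapMatrix ez.1 from rfl]
  simp only [pz, qz, cz, az, bz, dz, ez, fz, Pmat, Qmat, Cmat, Wmat, Lmat, LmatInv]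
  ext i j
  fin_cases i <;> fin_cases j <;>
    simp [Matrix.mul_apply, Fin.sum_univ_succ] <;> norm_num

private lemma map_fz : Matrix.SpecialLinearGroup.map (Int.castRingHom ℝ) fz = Lmat ^ 3 := by
  rw [pow_succ, pow_two]
  apply Subtype.ext
  rw [Matrix.SpecialLinearGroup.coe_mul, Matrix.SpecialLinearGroup.coe_mul]
  rw [show (Matrix.SpecialLinearGroup.map (Int.castRingHom ℝ) fz).1
      = (Int.castRingHom ℝ).mapMatrix fz.1 from rfl]
  simp only [pz, qz, cz, az, bz, dz, ez, fz, Pmat, Qmat, Cmat, Wmat, Lmat, LmatInv]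
  ext i j
  fin_cases i <;> fin_cases j <;>
    simp [Matrix.mul_apply, Fin.sum_univ_succ] <;> norm_num

private lemma HZ_def : HZ = Subgroup.closure gensZ := rfl

/-- Each of the eight matrices `P₁, Q, C, L₂₀W₂₀L₂₀⁻¹, L₂₀⁻¹W₂₀L₂₀, L₂₀CL₂₀⁻¹, L₂₀⁻¹CL₂₀, L₂₀³`
has integer entries and lies in `Γ₀(20)`, and they generate (the image in `SL(2,ℝ)` of)
`Γ₀(20)`. -/
theorem gamma0_20_generated_by_L_conjugates :
    (∀ m ∈ ({Pmat, Qmat, Cmat,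
        Lmat * Wmat * Lmat⁻¹, Lmat⁻¹ * Wmat * Lmat,
        Lmat * Cmat * Lmat⁻¹, Lmat⁻¹ * Cmat * Lmat, Lmat ^ 3} : Set SL(2, ℝ)),
      ∃ g : SL(2, ℤ), g ∈ CongruenceSubgroup.Gamma0 20 ∧
        Matrix.SpecialLinearGroup.map (Int.castRingHom ℝ) g = m) ∧
    Subgroup.closure
      ({Pmat, Qmat, Cmat,
        Lmat * Wmat * Lmat⁻¹, Lmat⁻¹ * Wmat * Lmat,
        Lmat * Cmat * Lmat⁻¹, Lmat⁻¹ * Cmat * Lmat, Lmat ^ 3} : Set SL(2, ℝ)) =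
      Subgroup.map (Matrix.SpecialLinearGroup.map (Int.castRingHom ℝ))
        (CongruenceSubgroup.Gamma0 20) := by
  constructor
  · intro m hm
    simp only [Set.mem_insert_iff, Set.mem_singleton_iff] at hm
    rcases hm with rfl|rfl|rfl|rfl|rfl|rfl|rfl|rfl
    · exact ⟨pz, by rw [CongruenceSubgroup.Gamma0_mem]; decide, map_pz⟩
    · exact ⟨qz, by rw [CongruenceSubgroup.Gamma0_mem]; decide, map_qz⟩
    · exact ⟨cz, by rw [CongruenceSubgroup.Gamma0_mem]; decide, map_cz⟩
    · exact ⟨az, by rw [CongruenceSubgroup.Gamma0_mem]; decide, map_az⟩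
    · exact ⟨bz, by rw [CongruenceSubgroup.Gamma0_mem]; decide, map_bz⟩
    · exact ⟨dz, by rw [CongruenceSubgroup.Gamma0_mem]; decide, map_dz⟩
    · exact ⟨ez, by rw [CongruenceSubgroup.Gamma0_mem]; decide, map_ez⟩
    · exact ⟨fz, by rw [CongruenceSubgroup.Gamma0_mem]; decide, map_fz⟩
  · have himg : (Matrix.SpecialLinearGroup.map (Int.castRingHom ℝ)) '' gensZ
        = ({Pmat, Qmat, Cmat,
            Lmat * Wmat * Lmat⁻¹, Lmat⁻¹ * Wmat * Lmat,
            Lmat * Cmat * Lmat⁻¹, Lmat⁻¹ * Cmat * Lmat, Lmat ^ 3} : Set SL(2, ℝ)) := by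
      simp only [gensZ, Set.image_insert_eq, Set.image_singleton,
        map_pz, map_qz, map_cz, map_az, map_bz, map_dz, map_ez, map_fz]
    rw [← HZ_eq, HZ_def, MonoidHom.map_closure, himg]

end G20aux
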